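/- For all positive integers n and r with r ≥ 2, every covering single-insertion code C ⊆ [n]^r (i.e., C covers [n]^{r+1}) satisfies |C| ≥ n^r / r; equivalently, S(n,r+1,r) ≥ n^r / r. -/

import Mathlib

open MeasureTheory Filter Topology ENNReal

/-- `x` covers `a` if `x` is a subsequence of `a`. -/
def Covers {X : Type*} {r k : ℕ} (x : Fin r → X) (a : Fin k → X) : Prop :=
  ∃ g : Fin r → Fin k, StrictMono g ∧ ∀ i, a (g i) = x i

/-- `C ⊆ X^r` is a covering `(k-r)`-insertion code over `X`: every sequence in `X^k`
is covered by some sequence in `C`. -/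
def IsCoveringCode {X : Type*} (r k : ℕ) (C : Set (Fin r → X)) : Prop :=
  ∀ a : Fin k → X, ∃ x ∈ C, Covers x a

/-- Minimum size of a covering `(k-r)`-insertion code over the alphabet `[n]`. -/
noncomputable def covNum (n k r : ℕ) : ℕ :=
  sInf {m | ∃ C : Finset (Fin r → Fin n), IsCoveringCode r k (↑C : Set (Fin r → Fin n)) ∧ C.card = m}

/-- The unit cube `[0,1]^r`. -/
def unitCube (r : ℕ) : Set (Fin r → ℝ) := {x | ∀ i, x i ∈ Set.Icc (0 : ℝ) 1}

/-- `C ⊆ [0,1]^r` covers `[0,1]^k`. -/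
def CoversCube (r k : ℕ) (C : Set (Fin r → ℝ)) : Prop :=
  ∀ a ∈ unitCube k, ∃ x ∈ C, Covers x a

/-- Delete the `i`-th coordinate of a length `r+1` sequence. -/
def deleteAt {X : Type*} {r : ℕ} (i : Fin (r + 1)) (x : Fin (r + 1) → X) : Fin r → X :=
  x ∘ i.succAbove

/-- `extSet C i` is the set `C_i` of sequences in `X^{r+1}` whose subsequence obtained by
deleting the `i`-th coordinate belongs to `C`. -/
def extSet {X : Type*} {r : ℕ} (C : Set (Fin r → X)) (i : Fin (r + 1)) :
    Set (Fin (r + 1) → X) :=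
  {x | deleteAt i x ∈ C}

/-- A set of sequences is symmetric if it is closed under permuting the coordinates. -/
def IsSymmetric {X : Type*} {k : ℕ} (M : Set (Fin k → X)) : Prop :=
  ∀ x ∈ M, ∀ σ : Equiv.Perm (Fin k), x ∘ σ ∈ M

/-- The symmetric closure of a set of sequences. -/
def SymClosure {X : Type*} {k : ℕ} (M : Set (Fin k → X)) : Set (Fin k → X) :=
  {x | ∃ σ : Equiv.Perm (Fin k), x ∘ σ ∈ M}

/-- A Turán `(n,k,r)`-system: a family of `r`-element subsets of `[n]` such that every
`k`-element subset of `[n]` contains a member of the family. -/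
def IsTuranSystem (n k r : ℕ) (F : Finset (Finset (Fin n))) : Prop :=
  (∀ A ∈ F, A.card = r) ∧ ∀ K : Finset (Fin n), K.card = k → ∃ A ∈ F, A ⊆ K

/-- Minimum size of a Turán `(n,k,r)`-system. -/
noncomputable def turanNum (n k r : ℕ) : ℕ :=
  sInf {m | ∃ F : Finset (Finset (Fin n)), IsTuranSystem n k r F ∧ F.card = m}

section AuxCoveringCode

private lemma succAbove_val' {N : ℕ} (p : Fin (N+1)) (i : Fin N) :
    ((p.succAbove i : Fin (N+1)) : ℕ) = if (i:ℕ) < (p:ℕ) then (i:ℕ) else (i:ℕ)+1 := by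
  rcases lt_or_ge ((i:ℕ)) ((p:ℕ)) with h | h
  · rw [if_pos h, Fin.succAbove_of_castSucc_lt _ _ (by simpa [Fin.lt_def] using h)]; rfl
  · rw [if_neg (not_lt.2 h), Fin.succAbove_of_le_castSucc _ _ (by simpa [Fin.le_def] using h)]; rfl

private lemma predAbove_val' {N : ℕ} (p : Fin N) (i : Fin (N+1)) :
    ((p.predAbove i : Fin N) : ℕ) = if (p:ℕ) < (i:ℕ) then (i:ℕ) - 1 else (i:ℕ) := by
  rcases lt_or_ge ((p:ℕ)) ((i:ℕ)) with h | h
  · rw [if_pos h, Fin.predAbove_of_castSucc_lt _ _ (by simpa [Fin.lt_def] using h)]; rfl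
  · rw [if_neg (not_lt.2 h), Fin.predAbove_of_le_castSucc _ _ (by simpa [Fin.le_def] using h)]; rfl

private lemma idx_II {N : ℕ} (i : Fin (N+1)) (j : Fin (N+2)) :
    (j.succAbove i).succAbove (i.predAbove j) = j := by
  have hi := i.is_lt; have hj := j.is_lt
  apply Fin.ext; simp only [succAbove_val', predAbove_val']; split_ifs <;> omega

private lemma idx_I {N : ℕ} (i : Fin (N+1)) (j : Fin (N+2)) (t : Fin N) :
    (j.succAbove i).succAbove ((i.predAbove j).succAbove t) = j.succAbove (i.succAbove t) := by
  have hi := i.is_lt; have hj := j.is_lt; have ht := t.is_lt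
  apply Fin.ext; simp only [succAbove_val', predAbove_val']; split_ifs <;> omega

private lemma removeNth_insertNth_comm {X : Type*} {N : ℕ} (b : Fin (N+1) → X) (c : X)
    (i : Fin (N+1)) (j : Fin (N+2)) :
    Fin.removeNth (α := fun _ => X) (j.succAbove i) (Fin.insertNth j c b) =
      Fin.insertNth (α := fun _ => X) (i.predAbove j) c (Fin.removeNth i b) := by
  funext t
  by_cases ht : t = i.predAbove j
  · subst ht
    show Fin.insertNth (α := fun _ => X) j c b ((j.succAbove i).succAbove (i.predAbove j))
        = Fin.insertNth (α := fun _ => X) (i.predAbove j) c (Fin.removeNth i b) (i.predAbove j)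
    rw [idx_II, Fin.insertNth_apply_same, Fin.insertNth_apply_same]
  · obtain ⟨t', rfl⟩ := Fin.exists_succAbove_eq ht
    show Fin.insertNth (α := fun _ => X) j c b ((j.succAbove i).succAbove ((i.predAbove j).succAbove t'))
        = Fin.insertNth (α := fun _ => X) (i.predAbove j) c (Fin.removeNth i b) ((i.predAbove j).succAbove t')
    rw [idx_I, Fin.insertNth_apply_succAbove, Fin.insertNth_apply_succAbove]
    rfl

private lemma covers_iff {X : Type*} {r : ℕ} (x : Fin r → X) (a : Fin (r+1) → X) :
    Covers x a ↔ ∃ i : Fin (r+1), Fin.removeNth i a = x := by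
  constructor
  · rintro ⟨g, hg, hga⟩
    have hns : ¬Function.Surjective g := by
      intro hs
      have := Fintype.card_le_of_surjective g hs
      simp at this
    rw [Function.Surjective] at hns
    push_neg at hns
    obtain ⟨i, hi⟩ := hns
    have hT : (Finset.univ.image g) = ({i}ᶜ : Finset (Fin (r+1))) := by
      apply Finset.eq_of_subset_of_card_le
      · intro q hq
        simp only [Finset.mem_image] at hq
        obtain ⟨z, _, rfl⟩ := hq
        simpa using hi z
      · rw [Finset.card_compl, Finset.card_image_of_injective _ hg.injective]
        simp
    have hrange : Set.range g = Set.range i.succAbove := by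
      rw [Fin.range_succAbove, ← Set.image_univ, ← Finset.coe_univ, ← Finset.coe_image, hT]
      simp
    have hgs : g = i.succAbove := (StrictMono.range_inj hg (Fin.strictMono_succAbove i)).mp hrange
    refine ⟨i, ?_⟩
    funext t
    rw [show Fin.removeNth i a t = a (i.succAbove t) from rfl, ← hgs, hga]
  · rintro ⟨i, rfl⟩
    exact ⟨i.succAbove, Fin.strictMono_succAbove i, fun t => rfl⟩

private def dd {n m : ℕ} (B : Finset (Fin (m+2) → Fin n)) (y : Fin (m+1) → Fin n)
    (j : Fin (m+2)) : ℕ :=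
  (Finset.univ.filter (fun c : Fin n => Fin.insertNth j c y ∈ B)).card

private def ss {n m : ℕ} (B : Finset (Fin (m+2) → Fin n)) (y : Fin (m+1) → Fin n) : ℕ :=
  ∑ j, dd B y j

private lemma main_bound {n m : ℕ} (C : Finset (Fin (m+2) → Fin n))
    (hC : IsCoveringCode (m+2) (m+3) (↑C : Set (Fin (m+2) → Fin n))) :
    ((n:ℝ)) ^ (m+2) ≤ ((m:ℝ)+2) * C.card := by
  classical
  set B : Finset (Fin (m+2) → Fin n) := Cᶜ with hB
  -- reusable bijection sum lemma
  have SB : ∀ (i : Fin (m+2)) (F : (Fin (m+1) → Fin n) → ℕ),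
      ∑ b ∈ B, F (Fin.removeNth i b) = ∑ y : Fin (m+1) → Fin n, dd B y i * F y := by
    intro i F
    calc ∑ b ∈ B, F (Fin.removeNth i b)
        = ∑ b : Fin (m+2) → Fin n, if b ∈ B then F (Fin.removeNth i b) else 0 := by
          rw [Finset.sum_ite_mem, Finset.univ_inter]
      _ = ∑ p : Fin n × (Fin (m+1) → Fin n),
            if (Fin.insertNthEquiv (fun _ => Fin n) i) p ∈ B then
              F (Fin.removeNth i ((Fin.insertNthEquiv (fun _ => Fin n) i) p)) else 0 :=
          (Equiv.sum_comp (Fin.insertNthEquiv (fun _ => Fin n) i) _).symm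
      _ = ∑ p : Fin n × (Fin (m+1) → Fin n),
            if Fin.insertNth i p.1 p.2 ∈ B then F p.2 else 0 := by
          refine Finset.sum_congr rfl fun p _ => ?_
          simp [Fin.insertNthEquiv]
      _ = ∑ y : Fin (m+1) → Fin n, ∑ c : Fin n,
            if Fin.insertNth i c y ∈ B then F y else 0 := Fintype.sum_prod_type_right _
      _ = ∑ y : Fin (m+1) → Fin n, dd B y i * F y := by
          refine Finset.sum_congr rfl fun y _ => ?_
          rw [← Finset.sum_filter, Finset.sum_const, smul_eq_mul, dd]
  have claim1 : ∑ y : Fin (m+1) → Fin n, ss B y = (m+2) * B.card := by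
    calc ∑ y : Fin (m+1) → Fin n, ss B y
        = ∑ j : Fin (m+2), ∑ y : Fin (m+1) → Fin n, dd B y j := Finset.sum_comm
      _ = ∑ _j : Fin (m+2), B.card := by
          refine Finset.sum_congr rfl fun j _ => ?_
          have h := SB j (fun _ => 1)
          simpa using h.symm
      _ = (m+2) * B.card := by simp [Finset.sum_const, mul_comm]
  have claim2 : ∀ b ∈ B, ∀ (j : Fin (m+3)) (c : Fin n),
      ∃ i : Fin (m+2), Fin.insertNth (i.predAbove j) c (Fin.removeNth i b) ∉ B := by
    intro b hb j c
    obtain ⟨x, hxC, hcov⟩ := hC (Fin.insertNth j c b)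
    rw [covers_iff] at hcov
    obtain ⟨k, hk⟩ := hcov
    rw [Finset.mem_coe] at hxC
    by_cases hkj : k = j
    · subst hkj
      rw [Fin.removeNth_insertNth] at hk
      rw [hB, Finset.mem_compl] at hb
      exact absurd (hk ▸ hxC) hb
    · obtain ⟨i, rfl⟩ := Fin.exists_succAbove_eq hkj
      rw [removeNth_insertNth_comm] at hk
      refine ⟨i, ?_⟩
      rw [hk, hB, Finset.mem_compl, not_not]
      exact hxC
  have claim3 : ∀ b ∈ B, ∀ j : Fin (m+3),
      ∑ i : Fin (m+2), dd B (Fin.removeNth i b) (i.predAbove j) ≤ (m+1) * n := by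
    intro b hb j
    calc ∑ i : Fin (m+2), dd B (Fin.removeNth i b) (i.predAbove j)
        = ∑ i : Fin (m+2), ∑ c : Fin n,
            if Fin.insertNth (i.predAbove j) c (Fin.removeNth i b) ∈ B then 1 else 0 := by
          refine Finset.sum_congr rfl fun i _ => ?_
          rw [dd, Finset.card_filter]
      _ = ∑ c : Fin n, ∑ i : Fin (m+2),
            if Fin.insertNth (i.predAbove j) c (Fin.removeNth i b) ∈ B then 1 else 0 :=
          Finset.sum_comm
      _ ≤ ∑ _c : Fin n, (m+1) := by
          refine Finset.sum_le_sum fun c _ => ?_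
          rw [← Finset.card_filter]
          have hne : (Finset.univ.filter
              (fun i : Fin (m+2) =>
                Fin.insertNth (i.predAbove j) c (Fin.removeNth i b) ∈ B)) ≠ Finset.univ := by
            intro hq
            obtain ⟨i, hi⟩ := claim2 b hb j c
            have : i ∈ Finset.univ.filter
                (fun i : Fin (m+2) =>
                  Fin.insertNth (i.predAbove j) c (Fin.removeNth i b) ∈ B) := by
              rw [hq]; exact Finset.mem_univ i
            exact hi (Finset.mem_filter.mp this).2
          have := (Finset.card_lt_iff_ne_univ _).2 hne
          rw [Fintype.card_fin] at this
          omega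
      _ = (m+1) * n := by simp [Finset.sum_const, mul_comm]
  have claim5 : ∀ (y : Fin (m+1) → Fin n) (i : Fin (m+2)),
      ∑ j : Fin (m+3), dd B y (i.predAbove j) = ss B y + dd B y i := by
    intro y i
    rw [Fin.sum_univ_succAbove (fun j => dd B y (i.predAbove j)) i.castSucc]
    simp only [Fin.predAbove_castSucc_self, Fin.predAbove_succAbove]
    rw [ss, add_comm]
  -- the key inequality, in ℕ
  have key : ∑ y : Fin (m+1) → Fin n, ss B y * ss B y
      + ∑ y : Fin (m+1) → Fin n, ∑ i : Fin (m+2), dd B y i * dd B y i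
      ≤ B.card * ((m+3) * ((m+1) * n)) := by
    have lhs_eq : ∑ b ∈ B, ∑ j : Fin (m+3), ∑ i : Fin (m+2),
        dd B (Fin.removeNth i b) (i.predAbove j)
        = ∑ y : Fin (m+1) → Fin n, ss B y * ss B y
          + ∑ y : Fin (m+1) → Fin n, ∑ i : Fin (m+2), dd B y i * dd B y i := by
      calc ∑ b ∈ B, ∑ j : Fin (m+3), ∑ i : Fin (m+2), dd B (Fin.removeNth i b) (i.predAbove j)
          = ∑ b ∈ B, ∑ i : Fin (m+2), ∑ j : Fin (m+3), dd B (Fin.removeNth i b) (i.predAbove j) := by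
            exact Finset.sum_congr rfl fun b _ => Finset.sum_comm
        _ = ∑ b ∈ B, ∑ i : Fin (m+2), (ss B (Fin.removeNth i b) + dd B (Fin.removeNth i b) i) := by
            exact Finset.sum_congr rfl fun b _ => Finset.sum_congr rfl fun i _ => claim5 _ i
        _ = ∑ i : Fin (m+2), ∑ b ∈ B, ss B (Fin.removeNth i b)
            + ∑ i : Fin (m+2), ∑ b ∈ B, dd B (Fin.removeNth i b) i := by
            rw [← Finset.sum_add_distrib, Finset.sum_comm]
            exact Finset.sum_congr rfl fun b _ => Finset.sum_add_distrib
        _ = ∑ i : Fin (m+2), ∑ y : Fin (m+1) → Fin n, dd B y i * ss B y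
            + ∑ i : Fin (m+2), ∑ y : Fin (m+1) → Fin n, dd B y i * dd B y i := by
            rw [Finset.sum_congr rfl fun i _ => SB i (ss B),
              Finset.sum_congr rfl fun i _ => SB i (fun y => dd B y i)]
        _ = ∑ y : Fin (m+1) → Fin n, ss B y * ss B y
            + ∑ y : Fin (m+1) → Fin n, ∑ i : Fin (m+2), dd B y i * dd B y i := by
            rw [Finset.sum_comm (γ := Fin (m+2))]
            congr 1
            · refine Finset.sum_congr rfl fun y _ => ?_
              rw [← Finset.sum_mul, ss]
            · exact Finset.sum_comm
    rw [← lhs_eq]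
    calc ∑ b ∈ B, ∑ j : Fin (m+3), ∑ i : Fin (m+2), dd B (Fin.removeNth i b) (i.predAbove j)
        ≤ ∑ b ∈ B, ((m+3) * ((m+1) * n)) := by
          refine Finset.sum_le_sum fun b hb => ?_
          calc ∑ j : Fin (m+3), ∑ i : Fin (m+2), dd B (Fin.removeNth i b) (i.predAbove j)
              ≤ ∑ _j : Fin (m+3), (m+1) * n := Finset.sum_le_sum fun j _ => claim3 b hb j
            _ = (m+3) * ((m+1) * n) := by simp [Finset.sum_const, mul_comm]
      _ = B.card * ((m+3) * ((m+1) * n)) := by rw [Finset.sum_const, smul_eq_mul]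
  -- pass to ℝ
  set β : ℝ := (B.card : ℝ) with hβdef
  set P : ℝ := ∑ y : Fin (m+1) → Fin n, ((ss B y : ℝ))^2 with hPdef
  set Q : ℝ := ∑ y : Fin (m+1) → Fin n, ∑ j : Fin (m+2), ((dd B y j : ℝ))^2 with hQdef
  have hYcard : ((Fintype.card (Fin (m+1) → Fin n)) : ℝ) = (n:ℝ)^(m+1) := by
    rw [Fintype.card_fun]
    push_cast [Fintype.card_fin]
    ring
  have cs1 : (∑ y : Fin (m+1) → Fin n, (ss B y : ℝ))^2 ≤ (n:ℝ)^(m+1) * P := by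
    have h := sq_sum_le_card_mul_sum_sq (s := (Finset.univ : Finset (Fin (m+1) → Fin n)))
      (f := fun y => (ss B y : ℝ))
    rwa [Finset.card_univ, hYcard] at h
  have cs2 : ∀ y : Fin (m+1) → Fin n,
      ((ss B y : ℝ))^2 ≤ ((m:ℝ)+2) * ∑ j : Fin (m+2), ((dd B y j : ℝ))^2 := by
    intro y
    have h := sq_sum_le_card_mul_sum_sq (s := (Finset.univ : Finset (Fin (m+2))))
      (f := fun j => (dd B y j : ℝ))
    rw [Finset.card_univ, Fintype.card_fin] at h
    have hcast : ((ss B y : ℕ) : ℝ) = ∑ j : Fin (m+2), ((dd B y j : ℝ)) := by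
      rw [ss]; push_cast; ring
    rw [hcast]
    convert h using 2
    · rfl
    · push_cast; ring
  have hsum : ∑ y : Fin (m+1) → Fin n, (ss B y : ℝ) = ((m:ℝ)+2) * β := by
    rw [hβdef]
    exact_mod_cast claim1
  have keyR : P + Q ≤ β * (((m:ℝ)+3) * (((m:ℝ)+1) * (n:ℝ))) := by
    have hc := (Nat.cast_le (α := ℝ)).mpr key
    push_cast at hc
    rw [hPdef, hQdef, hβdef]
    calc (∑ y : Fin (m+1) → Fin n, ((ss B y : ℝ))^2)
          + ∑ y : Fin (m+1) → Fin n, ∑ j : Fin (m+2), ((dd B y j : ℝ))^2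
        = (∑ y : Fin (m+1) → Fin n, ((ss B y : ℝ)) * ((ss B y : ℝ)))
          + ∑ y : Fin (m+1) → Fin n, ∑ j : Fin (m+2), ((dd B y j : ℝ)) * ((dd B y j : ℝ)) := by
          simp [pow_two]
      _ ≤ (B.card : ℝ) * (((m:ℝ)+3) * (((m:ℝ)+1) * (n:ℝ))) := by exact_mod_cast hc
  have hcard_pow : (C.card : ℝ) + β = (n:ℝ)^(m+2) := by
    have h := Finset.card_add_card_compl C
    have h2 : Fintype.card (Fin (m+2) → Fin n) = n^(m+2) := by
      rw [Fintype.card_fun, Fintype.card_fin, Fintype.card_fin]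
    rw [h2, ← hB] at h
    rw [hβdef]
    exact_mod_cast h
  by_cases hβ0 : B.card = 0
  · have hc : (C.card : ℝ) = (n:ℝ)^(m+2) := by
      rw [← hcard_pow, hβdef, hβ0]; simp
    rw [hc]
    nlinarith [pow_nonneg (show (0:ℝ) ≤ (n:ℝ) by positivity) (m+2), Nat.cast_nonneg (α := ℝ) m]
  · have hβpos : 0 < β := by
      rw [hβdef]
      exact_mod_cast Nat.pos_of_ne_zero hβ0
    have h1 : (((m:ℝ)+2) * β)^2 ≤ (n:ℝ)^(m+1) * P := by rw [← hsum]; exact cs1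
    have h2 : P ≤ ((m:ℝ)+2) * Q := by
      rw [hPdef, hQdef, Finset.mul_sum]
      exact Finset.sum_le_sum fun y _ => cs2 y
    have h4 : ((m:ℝ)+3) * P ≤ ((m:ℝ)+2) * (β * (((m:ℝ)+3) * (((m:ℝ)+1) * (n:ℝ)))) := by
      have hA : (0:ℝ) ≤ (m:ℝ)+2 := by positivity
      calc ((m:ℝ)+3) * P = ((m:ℝ)+2) * P + P := by ring
        _ ≤ ((m:ℝ)+2) * P + ((m:ℝ)+2) * Q := by linarith
        _ = ((m:ℝ)+2) * (P + Q) := by ring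
        _ ≤ ((m:ℝ)+2) * (β * (((m:ℝ)+3) * (((m:ℝ)+1) * (n:ℝ)))) :=
            mul_le_mul_of_nonneg_left keyR hA
    have h5 : ((m:ℝ)+3) * ((((m:ℝ)+2) * β)^2) ≤ ((m:ℝ)+3) * ((n:ℝ)^(m+1) * P) :=
      mul_le_mul_of_nonneg_left h1 (by positivity)
    have h7 : (n:ℝ)^(m+1) * (((m:ℝ)+3) * P)
        ≤ (n:ℝ)^(m+1) * (((m:ℝ)+2) * (β * (((m:ℝ)+3) * (((m:ℝ)+1) * (n:ℝ))))) :=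
      mul_le_mul_of_nonneg_left h4 (by positivity)
    have hfac : 0 < ((m:ℝ)+3) * (((m:ℝ)+2) * β) := by positivity
    have h8 : (((m:ℝ)+3) * (((m:ℝ)+2) * β)) * ((((m:ℝ)+2)) * β)
        ≤ (((m:ℝ)+3) * (((m:ℝ)+2) * β)) * (((m:ℝ)+1) * (n:ℝ)^(m+2)) := by
      calc (((m:ℝ)+3) * (((m:ℝ)+2) * β)) * ((((m:ℝ)+2)) * β)
          = ((m:ℝ)+3) * ((((m:ℝ)+2) * β)^2) := by ring
        _ ≤ ((m:ℝ)+3) * ((n:ℝ)^(m+1) * P) := h5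
        _ = (n:ℝ)^(m+1) * (((m:ℝ)+3) * P) := by ring
        _ ≤ (n:ℝ)^(m+1) * (((m:ℝ)+2) * (β * (((m:ℝ)+3) * (((m:ℝ)+1) * (n:ℝ))))) := h7
        _ = (((m:ℝ)+3) * (((m:ℝ)+2) * β)) * (((m:ℝ)+1) * ((n:ℝ)^(m+1) * (n:ℝ))) := by ring
        _ = (((m:ℝ)+3) * (((m:ℝ)+2) * β)) * (((m:ℝ)+1) * (n:ℝ)^(m+2)) := by rw [← pow_succ]
    have h9 : (((m:ℝ)+2)) * β ≤ ((m:ℝ)+1) * (n:ℝ)^(m+2) := le_of_mul_le_mul_left h8 hfac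
    have h10 : ((m:ℝ)+2) * ((C.card : ℝ) + β) = ((m:ℝ)+2) * (n:ℝ)^(m+2) := by rw [hcard_pow]
    have h11 : ((m:ℝ)+2) * (C.card : ℝ) + ((m:ℝ)+2) * β = ((m:ℝ)+2) * (n:ℝ)^(m+2) := by
      linear_combination h10
    linarith [h9, h11]

end AuxCoveringCode

/-- For positive `n` and `r ≥ 2`, every covering single-insertion code
`C ⊆ [n]^r` satisfies `|C| ≥ n^r / r`; equivalently, `S(n,r+1,r) ≥ n^r / r`. -/
theorem card_coveringCode_ge {n r : ℕ} (hn : 0 < n) (hr : 2 ≤ r) :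
    (∀ C : Finset (Fin r → Fin n), IsCoveringCode r (r + 1) (↑C : Set (Fin r → Fin n)) →
      (n : ℝ) ^ r / r ≤ (C.card : ℝ)) ∧
    (n : ℝ) ^ r / r ≤ (covNum n (r + 1) r : ℝ) := by
  obtain ⟨m, rfl⟩ : ∃ m, r = m + 2 := ⟨r - 2, by omega⟩
  have part1 : ∀ C : Finset (Fin (m+2) → Fin n),
      IsCoveringCode (m+2) (m+2+1) (↑C : Set (Fin (m+2) → Fin n)) →
      (n : ℝ) ^ (m+2) / ((m+2 : ℕ) : ℝ) ≤ (C.card : ℝ) := by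
    intro C hC
    rw [div_le_iff₀ (by positivity : (0:ℝ) < ((m+2 : ℕ) : ℝ))]
    have h := main_bound C hC
    push_cast
    push_cast at h
    linarith
  refine ⟨part1, ?_⟩
  have hne : ∃ k, k ∈ {k | ∃ C : Finset (Fin (m+2) → Fin n),
      IsCoveringCode (m+2) (m+2+1) (↑C : Set (Fin (m+2) → Fin n)) ∧ C.card = k} := by
    refine ⟨(Finset.univ : Finset (Fin (m+2) → Fin n)).card, Finset.univ, ?_, rfl⟩
    intro a
    refine ⟨Fin.removeNth 0 a, by simp, ?_⟩
    exact (covers_iff _ _).mpr ⟨0, rfl⟩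
  have hmem := Nat.sInf_mem hne
  obtain ⟨C₀, hC₀, hcard⟩ := hmem
  have : covNum n (m+2+1) (m+2) = C₀.card := by
    rw [covNum, hcard]
  rw [this]
  exact part1 C₀ hC₀
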